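/- Let (X,d) be a complete, simply-connected metric space equipped with a convex local geodesic bicombing σ that is reversible, and let d̄ denote the induced length metric on X. Then the unique convex geodesic bicombing σ̃ on (X,d̄) that is consistent with σ is reversible, i.e. σ̃_{yx}(t) = σ̃_{xy}(1−t) for all x,y ∈ X and t ∈ [0,1]. -/

import Mathlib

open Set Metric

/-- `c : [0,1] → X` is a geodesic: `d(c s, c t) = |s - t| ⬝ d(c 0, c 1)` for `s, t ∈ [0,1]`. -/
def IsGeodesicSegment {X : Type*} [MetricSpace X] (c : ℝ → X) : Prop :=
  ∀ s ∈ Icc (0:ℝ) 1, ∀ t ∈ Icc (0:ℝ) 1,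
    dist (c s) (c t) = |s - t| * dist (c 0) (c 1)

/-- A local geodesic bicombing on a metric space `X`: an assignment `x ↦ r x > 0` and a
selection `σ y z` of geodesics from `y` to `z` for pairs `y, z` lying in a common ball
`U(x, r x)`, staying in that ball, and consistent with taking subsegments. -/
structure LocalGeodesicBicombing (X : Type*) [MetricSpace X] where
  r : X → ℝ
  r_pos : ∀ x, 0 < r x
  σ : X → X → ℝ → X
  source : ∀ x y z, y ∈ ball x (r x) → z ∈ ball x (r x) → σ y z 0 = y
  target : ∀ x y z, y ∈ ball x (r x) → z ∈ ball x (r x) → σ y z 1 = z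
  geodesic : ∀ x y z, y ∈ ball x (r x) → z ∈ ball x (r x) →
    ∀ s ∈ Icc (0:ℝ) 1, ∀ t ∈ Icc (0:ℝ) 1, dist (σ y z s) (σ y z t) = |s - t| * dist y z
  mem_ball : ∀ x y z, y ∈ ball x (r x) → z ∈ ball x (r x) →
    ∀ t ∈ Icc (0:ℝ) 1, σ y z t ∈ ball x (r x)
  consistent : ∀ x y z, y ∈ ball x (r x) → z ∈ ball x (r x) →
    ∀ a b, 0 ≤ a → a ≤ b → b ≤ 1 → ∀ t ∈ Icc (0:ℝ) 1,
      σ (σ y z a) (σ y z b) t = σ y z ((1 - t) * a + t * b)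

namespace LocalGeodesicBicombing

variable {X : Type*} [MetricSpace X]

/-- The domain `U` of the local bicombing: pairs of points lying in a common ball `U(x, r x)`. -/
def InDom (L : LocalGeodesicBicombing X) (y z : X) : Prop :=
  ∃ x, y ∈ ball x (L.r x) ∧ z ∈ ball x (L.r x)

/-- A local geodesic bicombing is convex if it is locally convex. -/
def IsConvex (L : LocalGeodesicBicombing X) : Prop :=
  ∀ x, ∀ y ∈ ball x (L.r x), ∀ z ∈ ball x (L.r x), ∀ y' ∈ ball x (L.r x), ∀ z' ∈ ball x (L.r x),
    ConvexOn ℝ (Icc (0:ℝ) 1) (fun t => dist (L.σ y z t) (L.σ y' z' t))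

/-- A local geodesic bicombing is reversible if `σ z y (t) = σ y z (1 - t)` on its domain. -/
def IsReversible (L : LocalGeodesicBicombing X) : Prop :=
  ∀ y z, L.InDom y z → ∀ t ∈ Icc (0:ℝ) 1, L.σ z y t = L.σ y z (1 - t)

end LocalGeodesicBicombing

/-- The length `L(γ)` of a curve `γ : [0,1] → X` (as a real number; the supremum over
partitions of `[0,1]` of the sums of consecutive distances). -/
noncomputable def curveLength {X : Type*} [MetricSpace X] (γ : ℝ → X) : ℝ :=
  (eVariationOn γ (Icc (0:ℝ) 1)).toReal

/-- `c : [0,1] → X` is a local geodesic: every `t ∈ [0,1]` has a neighborhood in `[0,1]` on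
which `d(c s, c s') = |s - s'| ⬝ L(c)`. -/
def IsLocalGeodesic {X : Type*} [MetricSpace X] (c : ℝ → X) : Prop :=
  ∀ t ∈ Icc (0:ℝ) 1, ∃ ε > (0:ℝ),
    ∀ s ∈ Icc (0:ℝ) 1 ∩ Ioo (t - ε) (t + ε), ∀ s' ∈ Icc (0:ℝ) 1 ∩ Ioo (t - ε) (t + ε),
      dist (c s) (c s') = |s - s'| * curveLength c

/-- A curve `c : [0,1] → X` is consistent with the local geodesic bicombing `L` if
`c ((1-t)a + tb) = σ (c a) (c b) t` whenever `0 ≤ a ≤ b ≤ 1` and `(c a, c b)` is in the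
domain of `L`. -/
def LocalGeodesicBicombing.ConsistentWith {X : Type*} [MetricSpace X]
    (L : LocalGeodesicBicombing X) (c : ℝ → X) : Prop :=
  ∀ a b, 0 ≤ a → a ≤ b → b ≤ 1 → L.InDom (c a) (c b) →
    ∀ t ∈ Icc (0:ℝ) 1, c ((1 - t) * a + t * b) = L.σ (c a) (c b) t

/-- The induced length metric `d̄(x,y)`: the infimum of lengths of continuous curves from
`x` to `y`. -/
noncomputable def lengthMetric {X : Type*} [MetricSpace X] (x y : X) : ℝ :=
  (⨅ (γ : ℝ → X) (_ : ContinuousOn γ (Icc (0:ℝ) 1)) (_ : γ 0 = x) (_ : γ 1 = y),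
    eVariationOn γ (Icc (0:ℝ) 1)).toReal

/-- `σ'` is a convex geodesic bicombing on `(X, d̄)` (where `d̄` is the induced length metric)
which is consistent with the local geodesic bicombing `L` on `(X, d)`: each `σ' x y` is a
geodesic from `x` to `y` with respect to `d̄`, the selection is consistent with taking
subsegments, the function `t ↦ d̄(σ' x y t, σ' x' y' t)` is convex on `[0,1]`, and each
`σ' x y`, viewed as a map into `(X, d)`, is a local geodesic consistent with `L`. -/
structure IsConsistentConvexBicombing {X : Type*} [MetricSpace X]
    (L : LocalGeodesicBicombing X) (σ' : X → X → ℝ → X) : Prop where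
  source : ∀ x y, σ' x y 0 = x
  target : ∀ x y, σ' x y 1 = y
  geodesic : ∀ x y, ∀ s ∈ Icc (0:ℝ) 1, ∀ t ∈ Icc (0:ℝ) 1,
    lengthMetric (σ' x y s) (σ' x y t) = |s - t| * lengthMetric x y
  consistent : ∀ x y a b, 0 ≤ a → a ≤ b → b ≤ 1 → ∀ t ∈ Icc (0:ℝ) 1,
    σ' (σ' x y a) (σ' x y b) t = σ' x y ((1 - t) * a + t * b)
  convex : ∀ x y x' y', ConvexOn ℝ (Icc (0:ℝ) 1)
    (fun t => lengthMetric (σ' x y t) (σ' x' y' t))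
  localGeodesic : ∀ x y, IsLocalGeodesic (σ' x y)
  consistentWith : ∀ x y, L.ConsistentWith (σ' x y)

/-- **Cartan–Hadamard theorem for convex bicombings (reversibility).**
If the convex local geodesic bicombing `σ` on a complete, simply-connected metric space is
reversible, then the (unique) convex geodesic bicombing on the induced length metric which
is consistent with `σ` is reversible as well: `σ̃ y x (t) = σ̃ x y (1 - t)`. -/

lemma my_slope_le {x w z fx fw fz A : ℝ} (hxw : x < w) (hwz : w < z)
    (h1 : A ≤ (fw - fx) / (w - x)) (h2 : A ≤ (fz - fw) / (z - w)) :
    A ≤ (fz - fx) / (z - x) := by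
  have h3 : 0 < w - x := by linarith
  have h4 : 0 < z - w := by linarith
  have h5 : 0 < z - x := by linarith
  rw [le_div_iff₀ h3] at h1
  rw [le_div_iff₀ h4] at h2
  rw [le_div_iff₀ h5]
  linarith

lemma my_le_slope {x w z fx fw fz B : ℝ} (hxw : x < w) (hwz : w < z)
    (h1 : (fw - fx) / (w - x) ≤ B) (h2 : (fz - fw) / (z - w) ≤ B) :
    (fz - fx) / (z - x) ≤ B := by
  have h3 : 0 < w - x := by linarith
  have h4 : 0 < z - w := by linarith
  have h5 : 0 < z - x := by linarith
  rw [div_le_iff₀ h3] at h1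
  rw [div_le_iff₀ h4] at h2
  rw [div_le_iff₀ h5]
  linarith

lemma convexOn_patch {f : ℝ → ℝ} {a m b : ℝ} (ha : 0 ≤ a) (ham : a < m) (hmb : m ≤ b)
    (h1 : ConvexOn ℝ (Icc 0 m) f) (h2 : ConvexOn ℝ (Icc a b) f) :
    ConvexOn ℝ (Icc 0 b) f := by
  rw [convexOn_iff_slope_mono_adjacent] at h1 h2 ⊢
  refine ⟨convex_Icc _ _, fun x y z hx hz hxy hyz => ?_⟩
  obtain ⟨hx0, hxb⟩ := hx
  obtain ⟨hz0, hzb⟩ := hz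
  rcases le_or_gt z m with hzm | hzm
  · exact h1.2 ⟨hx0, by linarith⟩ ⟨hz0, hzm⟩ hxy hyz
  rcases le_or_gt a x with hax | hax
  · exact h2.2 ⟨hax, by linarith⟩ ⟨by linarith, hzb⟩ hxy hyz
  rcases lt_or_ge y m with hym | hym
  · set w := (max a y + m) / 2 with hw
    have hmaxm : max a y < m := max_lt ham hym
    have hw1 : max a y < w := by rw [hw]; linarith
    have hw2 : w < m := by rw [hw]; linarith
    have haw : a < w := lt_of_le_of_lt (le_max_left a y) hw1
    have hyw : y < w := lt_of_le_of_lt (le_max_right a y) hw1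
    set v := (w + m) / 2 with hv
    have hwv : w < v := by rw [hv]; linarith
    have hvm : v < m := by rw [hv]; linarith
    have h0y : (0:ℝ) ≤ y := le_trans hx0 hxy.le
    have h0w : (0:ℝ) ≤ w := by linarith
    have s1 : (f y - f x) / (y - x) ≤ (f w - f y) / (w - y) :=
      h1.2 ⟨hx0, by linarith⟩ ⟨h0w, hw2.le⟩ hxy hyw
    have s2 : (f w - f y) / (w - y) ≤ (f v - f w) / (v - w) :=
      h1.2 ⟨h0y, by linarith⟩ ⟨by linarith, hvm.le⟩ hyw hwv
    have s3 : (f v - f w) / (v - w) ≤ (f z - f v) / (z - v) :=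
      h2.2 ⟨haw.le, by linarith⟩ ⟨by linarith, hzb⟩ hwv (by linarith)
    have s4 : (f y - f x) / (y - x) ≤ (f z - f w) / (z - w) :=
      my_slope_le hwv (by linarith) (s1.trans s2) ((s1.trans s2).trans s3)
    exact my_slope_le hyw (by linarith) s1 s4
  · set w := (a + m) / 2 with hw
    have haw : a < w := by rw [hw]; linarith
    have hwm : w < m := by rw [hw]; linarith
    set v := (w + m) / 2 with hv
    have hwv : w < v := by rw [hv]; linarith
    have hvm : v < m := by rw [hv]; linarith
    have hwy : w < y := by linarith
    have hvy : v < y := by linarith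
    have s1 : (f w - f x) / (w - x) ≤ (f v - f w) / (v - w) :=
      h1.2 ⟨hx0, by linarith⟩ ⟨by linarith, hvm.le⟩ (by linarith) hwv
    have s2 : (f v - f w) / (v - w) ≤ (f y - f v) / (y - v) :=
      h2.2 ⟨haw.le, by linarith⟩ ⟨by linarith, by linarith⟩ hwv hvy
    have s3 : (f y - f v) / (y - v) ≤ (f z - f y) / (z - y) :=
      h2.2 ⟨by linarith, by linarith⟩ ⟨by linarith, hzb⟩ hvy hyz
    have s4 : (f y - f w) / (y - w) ≤ (f z - f y) / (z - y) :=
      h2.2 ⟨haw.le, by linarith⟩ ⟨by linarith, hzb⟩ hwy hyz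
    exact my_le_slope (by linarith : x < w) hwy (s1.trans (s2.trans s3)) s4

lemma convexOn_of_locally {f : ℝ → ℝ}
    (h : ∀ t ∈ Icc (0:ℝ) 1, ∃ δ > (0:ℝ),
      ConvexOn ℝ (Icc (max 0 (t - δ)) (min 1 (t + δ))) f) :
    ConvexOn ℝ (Icc 0 1) f := by
  set S : Set ℝ := {t | t ∈ Icc (0:ℝ) 1 ∧ ConvexOn ℝ (Icc 0 t) f} with hS
  have h0S : (0:ℝ) ∈ S := by
    refine ⟨⟨le_refl _, zero_le_one⟩, ⟨convex_Icc _ _, fun p hp q hq u v hu hv huv => ?_⟩⟩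
    rw [Icc_self, mem_singleton_iff] at hp hq
    subst hp; subst hq
    simp only [smul_eq_mul, mul_zero, add_zero]
    rw [← add_mul, huv, one_mul]
  have hbdd : BddAbove S := ⟨1, fun t ht => ht.1.2⟩
  have hne : S.Nonempty := ⟨0, h0S⟩
  set T := sSup S with hT
  have hT0 : 0 ≤ T := le_csSup hbdd h0S
  have hT1 : T ≤ 1 := csSup_le hne fun t ht => ht.1.2
  obtain ⟨δ, hδ, hconv⟩ := h T ⟨hT0, hT1⟩
  set a := max 0 (T - δ) with had
  set b := min 1 (T + δ) with hbd
  have hbS : b ∈ S := by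
    have hb0 : 0 ≤ b := le_min zero_le_one (by linarith)
    have hb1 : b ≤ 1 := min_le_left _ _
    rcases le_or_gt (T - δ) 0 with hTδ | hTδ
    · have haz : a = 0 := max_eq_left hTδ
      rw [haz] at hconv
      exact ⟨⟨hb0, hb1⟩, hconv⟩
    · have haeq : a = T - δ := max_eq_right hTδ.le
      have haT : a < T := by rw [haeq]; linarith
      obtain ⟨t, htS, hat⟩ := exists_lt_of_lt_csSup hne haT
      have htT : t ≤ T := le_csSup hbdd htS
      have htb : t ≤ b := le_min (htS.1.2) (by linarith)
      exact ⟨⟨hb0, hb1⟩, convexOn_patch (le_max_left _ _) hat htb htS.2 hconv⟩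
  have hbT : b ≤ T := le_csSup hbdd hbS
  have hTeq : T = 1 := by
    by_contra hne1
    have h1 : T < 1 := lt_of_le_of_ne hT1 hne1
    have h2 : T < b := lt_min h1 (by linarith)
    linarith
  have hbeq : b = 1 := by rw [hbd, hTeq]; exact min_eq_left (by linarith)
  have := hbS.2
  rwa [hbeq] at this

lemma dist_le_of_local {X : Type*} [MetricSpace X] {c : ℝ → X} {K : ℝ}
    (h : ∀ t ∈ Icc (0:ℝ) 1, ∃ ε > (0:ℝ), ∀ s ∈ Icc (0:ℝ) 1 ∩ Ioo (t - ε) (t + ε),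
      ∀ s' ∈ Icc (0:ℝ) 1 ∩ Ioo (t - ε) (t + ε), dist (c s) (c s') ≤ K * |s - s'|) :
    ∀ s ∈ Icc (0:ℝ) 1, ∀ s' ∈ Icc (0:ℝ) 1, dist (c s) (c s') ≤ K * |s - s'| := by
  suffices H : ∀ s ∈ Icc (0:ℝ) 1, ∀ s' ∈ Icc (0:ℝ) 1, s ≤ s' →
      dist (c s) (c s') ≤ K * (s' - s) by
    intro s hs s' hs'
    rcases le_total s s' with hss | hss
    · rw [abs_sub_comm, abs_of_nonneg (by linarith)]
      exact H s hs s' hs' hss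
    · rw [abs_of_nonneg (by linarith), dist_comm]
      exact H s' hs' s hs hss
  intro s hs s' hs' hss
  set A : Set ℝ := {u | u ∈ Icc s 1 ∧ ∀ v ∈ Icc s u, dist (c s) (c v) ≤ K * (v - s)} with hA
  have hsA : s ∈ A := by
    refine ⟨⟨le_refl _, hs.2⟩, fun v hv => ?_⟩
    have hv' : v = s := le_antisymm hv.2 hv.1
    rw [hv']; simp
  have hAne : A.Nonempty := ⟨s, hsA⟩
  have hbdd : BddAbove A := ⟨1, fun u hu => hu.1.2⟩
  set T := sSup A with hT
  have hsT : s ≤ T := le_csSup hbdd hsA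
  have hT1 : T ≤ 1 := csSup_le hAne fun u hu => hu.1.2
  have hT01 : T ∈ Icc (0:ℝ) 1 := ⟨le_trans hs.1 hsT, hT1⟩
  obtain ⟨ε, hε, hloc⟩ := h T hT01
  have hTmem : T ∈ Icc (0:ℝ) 1 ∩ Ioo (T - ε) (T + ε) :=
    ⟨hT01, by constructor <;> linarith⟩
  have hTA : ∀ v ∈ Icc s T, dist (c s) (c v) ≤ K * (v - s) := by
    have hTT : dist (c s) (c T) ≤ K * (T - s) := by
      rcases eq_or_lt_of_le hsT with hsv | hsv
      · rw [← hsv]; simp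
      · have hwv : max s (T - ε / 2) < T := max_lt hsv (by linarith)
        obtain ⟨u, huA, hwu⟩ := exists_lt_of_lt_csSup hAne hwv
        have huT : u ≤ T := le_csSup hbdd huA
        have hu1 : dist (c s) (c u) ≤ K * (u - s) := huA.2 u ⟨huA.1.1, le_refl _⟩
        have humem : u ∈ Icc (0:ℝ) 1 ∩ Ioo (T - ε) (T + ε) := by
          refine ⟨⟨le_trans hs.1 huA.1.1, huA.1.2⟩, ?_, by linarith⟩
          have h1 : T - ε / 2 ≤ max s (T - ε / 2) := le_max_right _ _
          linarith
        have huT2 : dist (c u) (c T) ≤ K * (T - u) := by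
          have h1 := hloc u humem T hTmem
          rwa [abs_sub_comm, abs_of_nonneg (by linarith)] at h1
        calc dist (c s) (c T) ≤ dist (c s) (c u) + dist (c u) (c T) := dist_triangle _ _ _
          _ ≤ K * (u - s) + K * (T - u) := add_le_add hu1 huT2
          _ = K * (T - s) := by ring
    intro v hv
    rcases lt_or_eq_of_le hv.2 with hvT | hvT
    · obtain ⟨u, huA, hvu⟩ := exists_lt_of_lt_csSup hAne hvT
      exact huA.2 v ⟨hv.1, hvu.le⟩
    · rw [hvT]; exact hTT
  have hTeq : T = 1 := by
    by_contra hne1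
    have hTlt : T < 1 := lt_of_le_of_ne hT1 hne1
    set w := min 1 (T + ε / 2) with hw
    have hTw : T < w := lt_min hTlt (by linarith)
    have hwA : w ∈ A := by
      refine ⟨⟨le_trans hsT hTw.le, min_le_left _ _⟩, fun v hv => ?_⟩
      rcases le_or_gt v T with hvT | hvT
      · exact hTA v ⟨hv.1, hvT⟩
      · have h1 : dist (c s) (c T) ≤ K * (T - s) := hTA T ⟨hsT, le_refl _⟩
        have hvw : v ≤ w := hv.2
        have hv1 : v ≤ 1 := le_trans hvw (min_le_left _ _)
        have hvε : v ≤ T + ε / 2 := le_trans hvw (min_le_right _ _)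
        have hvmem : v ∈ Icc (0:ℝ) 1 ∩ Ioo (T - ε) (T + ε) :=
          ⟨⟨le_trans hs.1 hv.1, hv1⟩, by constructor <;> linarith⟩
        have h2 : dist (c T) (c v) ≤ K * (v - T) := by
          have h3 := hloc T hTmem v hvmem
          rwa [abs_sub_comm, abs_of_nonneg (by linarith)] at h3
        calc dist (c s) (c v) ≤ dist (c s) (c T) + dist (c T) (c v) := dist_triangle _ _ _
          _ ≤ K * (T - s) + K * (v - T) := add_le_add h1 h2
          _ = K * (v - s) := by ring
    have : w ≤ T := le_csSup hbdd hwA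
    linarith
  exact hTA s' ⟨hss, by rw [hTeq]; exact hs'.2⟩

lemma lengthMetric_self {X : Type*} [MetricSpace X] (p : X) : lengthMetric p p = 0 := by
  unfold lengthMetric
  have h1 : (⨅ (γ : ℝ → X) (_ : ContinuousOn γ (Icc (0:ℝ) 1)) (_ : γ 0 = p) (_ : γ 1 = p),
      eVariationOn γ (Icc (0:ℝ) 1)) ≤ eVariationOn (fun _ : ℝ => p) (Icc (0:ℝ) 1) :=
    iInf_le_of_le (fun _ => p) (iInf_le_of_le continuousOn_const
      (iInf_le_of_le rfl (iInf_le_of_le rfl le_rfl)))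
  have h2 : eVariationOn (fun _ : ℝ => p) (Icc (0:ℝ) 1) = 0 :=
    eVariationOn.constant_on (by
      intro u hu v hv
      obtain ⟨_, _, rfl⟩ := hu
      obtain ⟨_, _, rfl⟩ := hv
      rfl)
  rw [h2] at h1
  rw [le_zero_iff.1 h1]
  rfl

lemma eq_of_lengthMetric_eq_zero {X : Type*} [MetricSpace X] {p q : X} {γ : ℝ → X}
    (hc : ContinuousOn γ (Icc (0:ℝ) 1)) (h0 : γ 0 = p) (h1 : γ 1 = q)
    (hfin : eVariationOn γ (Icc (0:ℝ) 1) ≠ ⊤) (hlen : lengthMetric p q = 0) : p = q := by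
  unfold lengthMetric at hlen
  set I := ⨅ (γ : ℝ → X) (_ : ContinuousOn γ (Icc (0:ℝ) 1)) (_ : γ 0 = p) (_ : γ 1 = q),
    eVariationOn γ (Icc (0:ℝ) 1) with hI
  have hIle : I ≤ eVariationOn γ (Icc (0:ℝ) 1) :=
    iInf_le_of_le γ (iInf_le_of_le hc (iInf_le_of_le h0 (iInf_le_of_le h1 le_rfl)))
  have hItop : I ≠ ⊤ := ne_top_of_le_ne_top hfin hIle
  have hI0 : I = 0 := by
    rcases (ENNReal.toReal_eq_zero_iff I).1 hlen with h | h
    · exact h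
    · exact absurd h hItop
  have hedist : edist p q ≤ I := by
    rw [hI]
    refine le_iInf fun γ' => le_iInf fun hc' => le_iInf fun h0' => le_iInf fun h1' => ?_
    rw [← h0', ← h1']
    exact eVariationOn.edist_le γ' (left_mem_Icc.2 zero_le_one) (right_mem_Icc.2 zero_le_one)
  rw [hI0] at hedist
  exact edist_le_zero.1 hedist

set_option maxHeartbeats 2000000 in
theorem reversible_consistent_convex_bicombing
    {X : Type*} [MetricSpace X] [CompleteSpace X] [SimplyConnectedSpace X]
    (L : LocalGeodesicBicombing X) (hL : L.IsConvex) (hrev : L.IsReversible)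
    (σ' : X → X → ℝ → X) (h' : IsConsistentConvexBicombing L σ') :
    ∀ x y : X, ∀ t ∈ Icc (0:ℝ) 1, σ' y x t = σ' x y (1 - t) := by
  -- σ' agrees with L.σ on the domain of L
  have hloc_eq : ∀ p q : X, L.InDom p q → ∀ s ∈ Icc (0:ℝ) 1, σ' p q s = L.σ p q s := by
    intro p q hpq s hs
    have hdom : L.InDom (σ' p q 0) (σ' p q 1) := by
      rw [h'.source, h'.target]; exact hpq
    have h := h'.consistentWith p q 0 1 le_rfl zero_le_one le_rfl hdom s hs
    have harg : (1 - s) * 0 + s * 1 = s := by ring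
    rw [harg, h'.source, h'.target] at h
    exact h
  have hInDom_symm : ∀ p q : X, L.InDom p q → L.InDom q p := by
    rintro p q ⟨z, h1, h2⟩; exact ⟨z, h2, h1⟩
  -- local reversibility of σ'
  have hrev' : ∀ p q : X, L.InDom p q → ∀ s ∈ Icc (0:ℝ) 1, σ' q p s = σ' p q (1 - s) := by
    intro p q hpq s hs
    have h1s : 1 - s ∈ Icc (0:ℝ) 1 := ⟨by linarith [hs.2], by linarith [hs.1]⟩
    rw [hloc_eq q p (hInDom_symm p q hpq) s hs, hrev p q hpq s hs,
      ← hloc_eq p q hpq (1 - s) h1s]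
  intro x y t ht
  set K : ℝ := curveLength (σ' x y) with hK
  set K' : ℝ := curveLength (σ' y x) with hK'
  have hK0 : 0 ≤ K := ENNReal.toReal_nonneg
  have hK'0 : 0 ≤ K' := ENNReal.toReal_nonneg
  have hlipc : ∀ s ∈ Icc (0:ℝ) 1, ∀ s' ∈ Icc (0:ℝ) 1,
      dist (σ' x y s) (σ' x y s') ≤ K * |s - s'| := by
    apply dist_le_of_local
    intro t₀ ht₀
    obtain ⟨ε, hε, hp⟩ := h'.localGeodesic x y t₀ ht₀
    exact ⟨ε, hε, fun s hs s'' hs'' => by rw [mul_comm]; exact (hp s hs s'' hs'').le⟩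
  have hlipc' : ∀ s ∈ Icc (0:ℝ) 1, ∀ s' ∈ Icc (0:ℝ) 1,
      dist (σ' y x s) (σ' y x s') ≤ K' * |s - s'| := by
    apply dist_le_of_local
    intro t₀ ht₀
    obtain ⟨ε, hε, hp⟩ := h'.localGeodesic y x t₀ ht₀
    exact ⟨ε, hε, fun s hs s'' hs'' => by rw [mul_comm]; exact (hp s hs s'' hs'').le⟩
  set f : ℝ → ℝ := fun u => lengthMetric (σ' y x u) (σ' x y (1 - u)) with hf
  -- f is convex
  have hfconv : ConvexOn ℝ (Icc 0 1) f := by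
    apply convexOn_of_locally
    intro t₀ ht₀
    obtain ⟨ε₁, hε₁, hp₁⟩ := h'.localGeodesic y x t₀ ht₀
    have h1t₀ : 1 - t₀ ∈ Icc (0:ℝ) 1 := ⟨by linarith [ht₀.2], by linarith [ht₀.1]⟩
    obtain ⟨ε₂, hε₂, hp₂⟩ := h'.localGeodesic x y (1 - t₀) h1t₀
    have hr₁ : 0 < L.r (σ' y x t₀) := L.r_pos _
    have hr₂ : 0 < L.r (σ' x y (1 - t₀)) := L.r_pos _
    set r₁ : ℝ := L.r (σ' y x t₀) with hr₁d
    set r₂ : ℝ := L.r (σ' x y (1 - t₀)) with hr₂d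
    set δ : ℝ := min (min (ε₁ / 2) (ε₂ / 2)) (min (r₁ / (2 * (K' + 1))) (r₂ / (2 * (K + 1))))
      with hδd
    have hδ : 0 < δ := by
      refine lt_min (lt_min (by linarith) (by linarith)) (lt_min ?_ ?_) <;> positivity
    refine ⟨δ, hδ, ?_⟩
    set a := max 0 (t₀ - δ) with had
    set b := min 1 (t₀ + δ) with hbd
    have ha0 : 0 ≤ a := le_max_left _ _
    have hb1 : b ≤ 1 := min_le_left _ _
    have hat₀ : a ≤ t₀ := max_le ht₀.1 (by linarith)
    have ht₀b : t₀ ≤ b := le_min ht₀.2 (by linarith)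
    have hta : t₀ - δ ≤ a := le_max_right _ _
    have hbt : b ≤ t₀ + δ := min_le_right _ _
    have hab : a < b := by
      rcases lt_or_eq_of_le ht₀.2 with h1 | h1
      · have : t₀ < b := lt_min h1 (by linarith)
        linarith
      · have : a < 1 := max_lt zero_lt_one (by rw [← h1]; linarith)
        have h2 : (1:ℝ) ≤ b := by rw [hbd, ← h1]; exact le_min le_rfl (by linarith)
        linarith
    have haI : a ∈ Icc (0:ℝ) 1 := ⟨ha0, le_trans hat₀ ht₀.2⟩
    have hbI : b ∈ Icc (0:ℝ) 1 := ⟨le_trans ha0 hab.le, hb1⟩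
    have hδε₁ : δ ≤ ε₁ / 2 := le_trans (min_le_left _ _) (min_le_left _ _)
    have hδε₂ : δ ≤ ε₂ / 2 := le_trans (min_le_left _ _) (min_le_right _ _)
    have hδr₁ : δ ≤ r₁ / (2 * (K' + 1)) := le_trans (min_le_right _ _) (min_le_left _ _)
    have hδr₂ : δ ≤ r₂ / (2 * (K + 1)) := le_trans (min_le_right _ _) (min_le_right _ _)
    have hmem₁ : ∀ u, u ∈ Icc (0:ℝ) 1 → a ≤ u → u ≤ b →
        u ∈ Icc (0:ℝ) 1 ∩ Ioo (t₀ - ε₁) (t₀ + ε₁) := by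
      intro u hu hau hub
      exact ⟨hu, by constructor <;> linarith⟩
    have hmem₂ : ∀ u, u ∈ Icc (0:ℝ) 1 → a ≤ u → u ≤ b →
        (1 - u) ∈ Icc (0:ℝ) 1 ∩ Ioo ((1 - t₀) - ε₂) ((1 - t₀) + ε₂) := by
      intro u hu hau hub
      exact ⟨⟨by linarith [hu.2], by linarith [hu.1]⟩, by constructor <;> linarith⟩
    -- the pairs are in the domain of L
    have hdom' : L.InDom (σ' y x a) (σ' y x b) := by
      refine ⟨σ' y x t₀, ?_, ?_⟩ <;> rw [mem_ball]
      · have h1 := hp₁ a (hmem₁ a haI le_rfl hab.le) t₀ (hmem₁ t₀ ht₀ hat₀ ht₀b)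
        rw [h1, ← hK']
        have h2 : |a - t₀| ≤ δ := abs_le.2 ⟨by linarith, by linarith⟩
        have h3 : |a - t₀| * K' ≤ δ * K' := mul_le_mul_of_nonneg_right h2 hK'0
        have h4 : δ * K' < r₁ := by
          have h5 : δ * K' ≤ (r₁ / (2 * (K' + 1))) * K' :=
            mul_le_mul_of_nonneg_right hδr₁ hK'0
          have h6 : (r₁ / (2 * (K' + 1))) * K' < r₁ := by
            rw [div_mul_eq_mul_div, div_lt_iff₀ (by positivity)]
            nlinarith
          linarith
        linarith
      · have h1 := hp₁ b (hmem₁ b hbI hab.le le_rfl) t₀ (hmem₁ t₀ ht₀ hat₀ ht₀b)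
        rw [h1, ← hK']
        have h2 : |b - t₀| ≤ δ := abs_le.2 ⟨by linarith, by linarith⟩
        have h3 : |b - t₀| * K' ≤ δ * K' := mul_le_mul_of_nonneg_right h2 hK'0
        have h4 : δ * K' < r₁ := by
          have h5 : δ * K' ≤ (r₁ / (2 * (K' + 1))) * K' :=
            mul_le_mul_of_nonneg_right hδr₁ hK'0
          have h6 : (r₁ / (2 * (K' + 1))) * K' < r₁ := by
            rw [div_mul_eq_mul_div, div_lt_iff₀ (by positivity)]
            nlinarith
          linarith
        linarith
    have hdomc : L.InDom (σ' x y (1 - a)) (σ' x y (1 - b)) := by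
      refine ⟨σ' x y (1 - t₀), ?_, ?_⟩ <;> rw [mem_ball]
      · have h1 := hp₂ (1 - a) (hmem₂ a haI le_rfl hab.le) (1 - t₀)
          (hmem₂ t₀ ht₀ hat₀ ht₀b)
        rw [h1, ← hK]
        have h2 : |1 - a - (1 - t₀)| ≤ δ := abs_le.2 ⟨by linarith, by linarith⟩
        have h3 : |1 - a - (1 - t₀)| * K ≤ δ * K := mul_le_mul_of_nonneg_right h2 hK0
        have h4 : δ * K < r₂ := by
          have h5 : δ * K ≤ (r₂ / (2 * (K + 1))) * K :=
            mul_le_mul_of_nonneg_right hδr₂ hK0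
          have h6 : (r₂ / (2 * (K + 1))) * K < r₂ := by
            rw [div_mul_eq_mul_div, div_lt_iff₀ (by positivity)]
            nlinarith
          linarith
        linarith
      · have h1 := hp₂ (1 - b) (hmem₂ b hbI hab.le le_rfl) (1 - t₀)
          (hmem₂ t₀ ht₀ hat₀ ht₀b)
        rw [h1, ← hK]
        have h2 : |1 - b - (1 - t₀)| ≤ δ := abs_le.2 ⟨by linarith, by linarith⟩
        have h3 : |1 - b - (1 - t₀)| * K ≤ δ * K := mul_le_mul_of_nonneg_right h2 hK0
        have h4 : δ * K < r₂ := by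
          have h5 : δ * K ≤ (r₂ / (2 * (K + 1))) * K :=
            mul_le_mul_of_nonneg_right hδr₂ hK0
          have h6 : (r₂ / (2 * (K + 1))) * K < r₂ := by
            rw [div_mul_eq_mul_div, div_lt_iff₀ (by positivity)]
            nlinarith
          linarith
        linarith
    -- the key identity on [a, b]
    have hba : 0 < b - a := by linarith
    have hg : ConvexOn ℝ (Icc (0:ℝ) 1)
        (fun τ => lengthMetric (σ' (σ' y x a) (σ' y x b) τ)
          (σ' (σ' x y (1 - a)) (σ' x y (1 - b)) τ)) := h'.convex _ _ _ _
    have key : ∀ u ∈ Icc a b, f u =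
        lengthMetric (σ' (σ' y x a) (σ' y x b) ((u - a) / (b - a)))
          (σ' (σ' x y (1 - a)) (σ' x y (1 - b)) ((u - a) / (b - a))) := by
      intro u hu
      set τ := (u - a) / (b - a) with hτd
      have hτ : τ ∈ Icc (0:ℝ) 1 :=
        ⟨div_nonneg (by linarith [hu.1]) hba.le, (div_le_one hba).2 (by linarith [hu.2])⟩
      have hteq : (1 - τ) * a + τ * b = u := by
        have h1 : τ * (b - a) = u - a := div_mul_cancel₀ _ hba.ne'
        linear_combination h1
      have e1 : σ' y x u = σ' (σ' y x a) (σ' y x b) τ := by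
        have h1 := h'.consistent y x a b ha0 hab.le hb1 τ hτ
        rw [hteq] at h1
        exact h1.symm
      have e2 : σ' x y (1 - u) = σ' (σ' x y (1 - a)) (σ' x y (1 - b)) τ := by
        have h1b : (0:ℝ) ≤ 1 - b := by linarith
        have hba' : 1 - b ≤ 1 - a := by linarith
        have h1a : 1 - a ≤ 1 := by linarith
        have h1τ : 1 - τ ∈ Icc (0:ℝ) 1 := ⟨by linarith [hτ.2], by linarith [hτ.1]⟩
        have hcons := h'.consistent x y (1 - b) (1 - a) h1b hba' h1a (1 - τ) h1τ
        have harg : (1 - (1 - τ)) * (1 - b) + (1 - τ) * (1 - a) = 1 - u := by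
          linear_combination -hteq
        rw [harg] at hcons
        rw [← hcons]
        have h2 := hrev' (σ' x y (1 - a)) (σ' x y (1 - b)) hdomc (1 - τ) h1τ
        rw [h2]
        norm_num
      rw [hf]
      simp only
      rw [e1, e2]
    refine ⟨convex_Icc _ _, fun u hu v hv p q hp hq hpq => ?_⟩
    have hmemuv : p • u + q • v ∈ Icc a b := (convex_Icc a b) hu hv hp hq hpq
    rw [key _ hmemuv, key _ hu, key _ hv]
    have haff : ((p • u + q • v) - a) / (b - a) =
        p • ((u - a) / (b - a)) + q • ((v - a) / (b - a)) := by
      simp only [smul_eq_mul]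
      rw [mul_div_assoc', mul_div_assoc', ← add_div]
      congr 1
      linear_combination a * hpq
    rw [haff]
    have hmu : (u - a) / (b - a) ∈ Icc (0:ℝ) 1 :=
      ⟨div_nonneg (by linarith [hu.1]) hba.le, (div_le_one hba).2 (by linarith [hu.2])⟩
    have hmv : (v - a) / (b - a) ∈ Icc (0:ℝ) 1 :=
      ⟨div_nonneg (by linarith [hv.1]) hba.le, (div_le_one hba).2 (by linarith [hv.2])⟩
    exact hg.2 hmu hmv hp hq hpq
  -- endpoints vanish, hence f ≡ 0
  have hf0 : f 0 = 0 := by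
    rw [hf]
    simp only
    rw [h'.source y x, show (1:ℝ) - 0 = 1 by norm_num, h'.target x y]
    exact lengthMetric_self y
  have hf1 : f 1 = 0 := by
    rw [hf]
    simp only
    rw [h'.target y x, show (1:ℝ) - 1 = 0 by norm_num, h'.source x y]
    exact lengthMetric_self x
  have hft : f t = 0 := by
    have h01 : (0:ℝ) ∈ Icc (0:ℝ) 1 := left_mem_Icc.2 zero_le_one
    have h11 : (1:ℝ) ∈ Icc (0:ℝ) 1 := right_mem_Icc.2 zero_le_one
    have h1 := hfconv.2 h01 h11 (by linarith [ht.2] : (0:ℝ) ≤ 1 - t) ht.1 (by ring)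
    simp only [smul_eq_mul, mul_zero, mul_one, zero_add] at h1
    rw [hf0, hf1] at h1
    have h2 : 0 ≤ f t := by
      rw [hf]; simp only; unfold lengthMetric; exact ENNReal.toReal_nonneg
    have h4 : (1 - t) * 0 + t * 0 = 0 := by ring
    rw [h4] at h1
    linarith
  -- construct a finite-length curve from σ' y x t to σ' x y (1 - t)
  have ht0 : 0 ≤ t := ht.1
  have ht1 : t ≤ 1 := ht.2
  set γ : ℝ → X := fun s => if s ≤ 1 / 2 then σ' y x ((1 - 2 * s) * t)
    else σ' x y (1 - (2 * s - 1) * t) with hγ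
  have hγ0 : γ 0 = σ' y x t := by
    rw [hγ]; simp only
    rw [if_pos (by norm_num : (0:ℝ) ≤ 1/2)]
    norm_num
  have hγ1 : γ 1 = σ' x y (1 - t) := by
    rw [hγ]; simp only
    rw [if_neg (by norm_num : ¬ (1:ℝ) ≤ 1/2)]
    norm_num
  have hγR : ∀ s, 1/2 ≤ s → γ s = σ' x y (1 - (2 * s - 1) * t) := by
    intro s h1
    rw [hγ]; simp only
    rcases lt_or_ge (1/2 : ℝ) s with h4 | h4
    · rw [if_neg (not_le.2 h4)]
    · have hs : s = 1/2 := le_antisymm h4 h1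
      rw [if_pos h4, hs]
      norm_num
      rw [h'.source y x, h'.target x y]
  have hLpiece : ∀ s s', 0 ≤ s → s ≤ s' → s' ≤ 1/2 →
      dist (γ s) (γ s') ≤ 2 * K' * (s' - s) := by
    intro s s' h1 h2 h3
    have hs2 : s ≤ 1/2 := le_trans h2 h3
    rw [hγ]; simp only
    rw [if_pos hs2, if_pos h3]
    have harg1 : (1 - 2 * s) * t ∈ Icc (0:ℝ) 1 := by
      constructor
      · apply mul_nonneg (by linarith) ht0
      · nlinarith
    have harg2 : (1 - 2 * s') * t ∈ Icc (0:ℝ) 1 := by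
      constructor
      · apply mul_nonneg (by linarith) ht0
      · nlinarith
    have hd := hlipc' _ harg1 _ harg2
    have he : |(1 - 2 * s) * t - (1 - 2 * s') * t| = 2 * (s' - s) * t := by
      rw [show (1 - 2 * s) * t - (1 - 2 * s') * t = 2 * (s' - s) * t by ring]
      exact abs_of_nonneg (mul_nonneg (by linarith) ht0)
    rw [he] at hd
    nlinarith [mul_nonneg (mul_nonneg hK'0 (by linarith : (0:ℝ) ≤ s' - s)) (by linarith : (0:ℝ) ≤ 1 - t)]
  have hRpiece : ∀ s s', 1/2 ≤ s → s ≤ s' → s' ≤ 1 →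
      dist (γ s) (γ s') ≤ 2 * K * (s' - s) := by
    intro s s' h1 h2 h3
    rw [hγR s h1, hγR s' (le_trans h1 h2)]
    have harg1 : 1 - (2 * s - 1) * t ∈ Icc (0:ℝ) 1 := by
      constructor <;> nlinarith
    have harg2 : 1 - (2 * s' - 1) * t ∈ Icc (0:ℝ) 1 := by
      constructor <;> nlinarith
    have hd := hlipc _ harg1 _ harg2
    have he : |(1 - (2 * s - 1) * t) - (1 - (2 * s' - 1) * t)| = 2 * (s' - s) * t := by
      rw [show (1 - (2 * s - 1) * t) - (1 - (2 * s' - 1) * t) = 2 * (s' - s) * t by ring]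
      exact abs_of_nonneg (mul_nonneg (by linarith) ht0)
    rw [he] at hd
    nlinarith [mul_nonneg (mul_nonneg hK0 (by linarith : (0:ℝ) ≤ s' - s)) (by linarith : (0:ℝ) ≤ 1 - t)]
  have main : ∀ s s', 0 ≤ s → s ≤ s' → s' ≤ 1 →
      dist (γ s) (γ s') ≤ (2 * K + 2 * K') * (s' - s) := by
    intro s s' h1 h2 h3
    rcases le_or_gt s' (1/2) with h4 | h4
    · have := hLpiece s s' h1 h2 h4
      nlinarith
    rcases le_or_gt (1/2 : ℝ) s with h5 | h5
    · have := hRpiece s s' h5 h2 h3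
      nlinarith
    · have hA := hLpiece s (1/2) h1 h5.le (le_refl _)
      have hB := hRpiece (1/2) s' (le_refl _) h4.le h3
      have htri := dist_triangle (γ s) (γ (1/2)) (γ s')
      nlinarith
  set M : NNReal := Real.toNNReal (2 * K + 2 * K') with hM
  have hMc : (M : ℝ) = 2 * K + 2 * K' := Real.coe_toNNReal _ (by positivity)
  have hlipOn : LipschitzOnWith M γ (Icc 0 1) := by
    rw [lipschitzOnWith_iff_dist_le_mul]
    intro u hu v hv
    rw [hMc, Real.dist_eq]
    rcases le_total u v with h | h
    · rw [abs_sub_comm, abs_of_nonneg (by linarith)]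
      have := main u v hu.1 h hv.2
      linarith
    · rw [abs_of_nonneg (by linarith), dist_comm]
      have := main v u hv.1 h hu.2
      linarith
  have hfin : eVariationOn γ (Icc (0:ℝ) 1) ≠ ⊤ := by
    have h1 := hlipOn.locallyBoundedVariationOn 0 1 (left_mem_Icc.2 zero_le_one)
      (right_mem_Icc.2 zero_le_one)
    rwa [inter_self] at h1
  have hsep := eq_of_lengthMetric_eq_zero hlipOn.continuousOn hγ0 hγ1 hfin hft
  exact hsep
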